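/- Under the power asymmetry specification, the c.d.f. of the second-highest order statistic V_{N−1:N} is, for every real v, P(V_{N−1:N} ≤ v) = (1 − N) F(v)^{Λ_N} + Σ_{i=1}^{N} F(v)^{Λ_{N|i}}. -/

import Mathlib

open MeasureTheory ProbabilityTheory

/-- The second-highest value among `v 1, …, v N` (for `N ≥ 2`): it equals the
maximum over pairs `i ≠ j` of `min (v i) (v j)`. -/
noncomputable def secondMax {N : ℕ} (v : Fin N → ℝ) : ℝ :=
  sSup {x | ∃ i j, i ≠ j ∧ x = min (v i) (v j)}

/-- Under the power asymmetry specification, the c.d.f. of the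
second-highest order statistic is
`P(V_{N−1:N} ≤ v) = (1 − N) F(v)^{Λ_N} + Σ_i F(v)^{Λ_{N|i}}`. -/
lemma secondMax_le_iff {N : ℕ} (hN : 2 ≤ N) (w : Fin N → ℝ) (v : ℝ) :
    secondMax w ≤ v ↔ ∀ i j, i ≠ j → min (w i) (w j) ≤ v := by
  have hS : {x | ∃ i j, i ≠ j ∧ x = min (w i) (w j)}.Finite := by
    apply (Set.finite_range (fun p : Fin N × Fin N => min (w p.1) (w p.2))).subset
    rintro x ⟨i, j, -, rfl⟩; exact ⟨(i, j), rfl⟩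
  have hne : {x | ∃ i j, i ≠ j ∧ x = min (w i) (w j)}.Nonempty := by
    refine ⟨min (w ⟨0, by omega⟩) (w ⟨1, by omega⟩), ⟨0, by omega⟩, ⟨1, by omega⟩, ?_, rfl⟩
    simp [Fin.ext_iff]
  rw [secondMax, csSup_le_iff hS.bddAbove hne]
  constructor
  · intro h i j hij; exact h _ ⟨i, j, hij, rfl⟩
  · rintro h x ⟨i, j, hij, rfl⟩; exact h i j hij

lemma secondMax_le_iff' {N : ℕ} (hN : 2 ≤ N) (w : Fin N → ℝ) (v : ℝ) :
    secondMax w ≤ v ↔ (∀ j, w j ≤ v) ∨ ∃ i, v < w i ∧ ∀ j, j ≠ i → w j ≤ v := by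
  rw [secondMax_le_iff hN]
  constructor
  · intro h
    by_cases hall : ∀ j, w j ≤ v
    · exact Or.inl hall
    · push_neg at hall
      obtain ⟨i, hi⟩ := hall
      refine Or.inr ⟨i, hi, fun j hj => ?_⟩
      have := h i j (Ne.symm hj)
      rcases min_le_iff.mp this with h1 | h1
      · exact absurd h1 (not_le.mpr hi)
      · exact h1
  · rintro (hall | ⟨i, hi, hrest⟩) a b hab
    · exact le_trans (min_le_left _ _) (hall a)
    · rcases ne_or_eq a i with ha | rfl
      · exact le_trans (min_le_left _ _) (hrest a ha)
      · exact le_trans (min_le_right _ _) (hrest b (Ne.symm hab))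

theorem secondMax_cdf_power_asymmetry
    {Ω : Type*} [MeasurableSpace Ω] (μ : Measure Ω) [IsProbabilityMeasure μ]
    (N : ℕ) (hN : 2 ≤ N) (l : Fin N → ℝ) (hl : ∀ i, 0 < l i)
    (F : ℝ → ℝ) (hFmono : Monotone F) (hFcont : Continuous F)
    (hF0 : Filter.Tendsto F Filter.atBot (nhds 0))
    (hF1 : Filter.Tendsto F Filter.atTop (nhds 1))
    (V : Fin N → Ω → ℝ) (hVmeas : ∀ i, Measurable (V i))
    (hindep : iIndepFun V μ)
    (hcdf : ∀ i v, μ {ω | V i ω ≤ v} = ENNReal.ofReal ((F v) ^ (l i))) :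
    ∀ v : ℝ,
      (μ {ω | secondMax (fun i => V i ω) ≤ v}).toReal
        = (1 - (N:ℝ)) * (F v) ^ (∑ j, l j) + ∑ i, (F v) ^ ((∑ j, l j) - l i) := by
  intro v
  classical
  set x : ℝ := F v with hx
  have hxnn : 0 ≤ x := hFmono.le_of_tendsto hF0 v
  have hxle1 : x ≤ 1 := hFmono.ge_of_tendsto hF1 v
  set p : Fin N → ℝ := fun i => x ^ (l i) with hpdef
  have hpnn : ∀ i, 0 ≤ p i := fun i => Real.rpow_nonneg hxnn _
  have hple1 : ∀ i, p i ≤ 1 := fun i => Real.rpow_le_one hxnn hxle1 (hl i).le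
  -- events
  set St : Fin N → Fin N → Set ℝ := fun i j => if j = i then Set.Ioi v else Set.Iic v with hSt
  set E : Fin N → Set Ω := fun i => ⋂ j, V j ⁻¹' St i j with hE
  set Eall : Set Ω := ⋂ j, V j ⁻¹' Set.Iic v with hEall
  have hmem_E : ∀ i ω, ω ∈ E i ↔ (v < V i ω ∧ ∀ j, j ≠ i → V j ω ≤ v) := by
    intro i ω
    simp only [hE, Set.mem_iInter, Set.mem_preimage, hSt]
    constructor
    · intro h
      refine ⟨by simpa using h i, fun j hj => by simpa [hj] using h j⟩
    · rintro ⟨h1, h2⟩ j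
      by_cases hj : j = i
      · subst hj; simpa using h1
      · simpa [hj] using h2 j hj
  -- event decomposition
  have hset : {ω | secondMax (fun i => V i ω) ≤ v} = Eall ∪ ⋃ i, E i := by
    ext ω
    rw [Set.mem_setOf_eq, secondMax_le_iff' hN]
    simp only [Set.mem_union, Set.mem_iUnion, hEall, Set.mem_iInter, Set.mem_preimage,
      Set.mem_Iic]
    constructor
    · rintro (h | ⟨i, h1, h2⟩)
      · exact Or.inl h
      · exact Or.inr ⟨i, (hmem_E i ω).mpr ⟨h1, h2⟩⟩
    · rintro (h | ⟨i, hi⟩)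
      · exact Or.inl h
      · obtain ⟨h1, h2⟩ := (hmem_E i ω).mp hi
        exact Or.inr ⟨i, h1, h2⟩
  -- measurability
  have hAmeas : ∀ j, MeasurableSet (V j ⁻¹' Set.Iic v) := fun j => (hVmeas j) measurableSet_Iic
  have hStmeas : ∀ i j, MeasurableSet (St i j) := by
    intro i j
    by_cases h : j = i <;> simp [hSt, h, measurableSet_Ioi, measurableSet_Iic]
  have hEmeas : ∀ i, MeasurableSet (E i) := fun i =>
    MeasurableSet.iInter fun j => (hVmeas j) (hStmeas i j)
  have hEallmeas : MeasurableSet Eall := MeasurableSet.iInter hAmeas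
  -- disjointness
  have hdisj1 : Disjoint Eall (⋃ i, E i) := by
    rw [Set.disjoint_left]
    intro ω hω hω'
    obtain ⟨i, hi⟩ := Set.mem_iUnion.mp hω'
    have h1 := ((hmem_E i ω).mp hi).1
    have h2 : V i ω ≤ v := by
      simpa using Set.mem_iInter.mp hω i
    exact absurd h2 (not_le.mpr h1)
  have hdisj2 : Pairwise (Function.onFun Disjoint E) := by
    intro i k hik
    rw [Function.onFun, Set.disjoint_left]
    intro ω hi hk
    have h1 := ((hmem_E i ω).mp hi).1
    have h2 := ((hmem_E k ω).mp hk).2 i hik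
    exact absurd h2 (not_le.mpr h1)
  -- basic cdf facts
  have hcdf' : ∀ j, μ (V j ⁻¹' Set.Iic v) = ENNReal.ofReal (p j) := fun j => hcdf j v
  -- measure of Eall
  have hμEall : μ Eall = ENNReal.ofReal (∏ j, p j) := by
    have key : μ Eall = ∏ j, μ (V j ⁻¹' Set.Iic v) := by
      have := hindep.measure_inter_preimage_eq_mul (S := Finset.univ)
        (sets := fun _ => Set.Iic v) (fun j _ => measurableSet_Iic)
      simpa [hEall] using this
    rw [key, ENNReal.ofReal_prod_of_nonneg (fun i _ => hpnn i)]
    exact Finset.prod_congr rfl fun j _ => hcdf' j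
  -- measure of complement
  have hμIoi : ∀ j, μ (V j ⁻¹' Set.Ioi v) = ENNReal.ofReal (1 - p j) := by
    intro j
    have : V j ⁻¹' Set.Ioi v = (V j ⁻¹' Set.Iic v)ᶜ := by
      ext ω; simp [not_le]
    rw [this, measure_compl (hAmeas j) (measure_ne_top μ _), measure_univ, hcdf' j,
      ENNReal.ofReal_sub _ (hpnn j), ENNReal.ofReal_one]
  -- measure of E i
  have hμE : ∀ i, μ (E i) = ENNReal.ofReal ((1 - p i) * ∏ j ∈ Finset.univ.erase i, p j) := by
    intro i
    have key : μ (E i) = ∏ j, μ (V j ⁻¹' St i j) := by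
      have := hindep.measure_inter_preimage_eq_mul (S := Finset.univ)
        (sets := St i) (fun j _ => hStmeas i j)
      simpa [hE] using this
    rw [key, ← Finset.mul_prod_erase Finset.univ _ (Finset.mem_univ i)]
    have h1 : μ (V i ⁻¹' St i i) = ENNReal.ofReal (1 - p i) := by
      rw [show St i i = Set.Ioi v by simp [hSt]]; exact hμIoi i
    have h2 : ∀ j ∈ Finset.univ.erase i, μ (V j ⁻¹' St i j) = ENNReal.ofReal (p j) := by
      intro j hj
      have hji : j ≠ i := (Finset.mem_erase.mp hj).1
      rw [show St i j = Set.Iic v by simp [hSt, hji]]; exact hcdf' j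
    rw [h1, Finset.prod_congr rfl h2,
      ← ENNReal.ofReal_prod_of_nonneg (fun j _ => hpnn j),
      ← ENNReal.ofReal_mul (by linarith [hple1 i])]
  -- combine
  have hERnn : ∀ i, 0 ≤ (1 - p i) * ∏ j ∈ Finset.univ.erase i, p j := fun i =>
    mul_nonneg (by linarith [hple1 i]) (Finset.prod_nonneg fun j _ => hpnn j)
  have htot : μ {ω | secondMax (fun i => V i ω) ≤ v}
      = ENNReal.ofReal (∏ j, p j + ∑ i, (1 - p i) * ∏ j ∈ Finset.univ.erase i, p j) := by
    rw [hset, measure_union hdisj1 (MeasurableSet.iUnion hEmeas),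
      measure_iUnion hdisj2 hEmeas, hμEall, tsum_fintype,
      show (∑ i, μ (E i)) = ∑ i, ENNReal.ofReal ((1 - p i) * ∏ j ∈ Finset.univ.erase i, p j)
        from Finset.sum_congr rfl fun i _ => hμE i,
      ← ENNReal.ofReal_sum_of_nonneg (fun i _ => hERnn i),
      ← ENNReal.ofReal_add (Finset.prod_nonneg fun j _ => hpnn j)
        (Finset.sum_nonneg fun i _ => hERnn i)]
  rw [htot, ENNReal.toReal_ofReal (add_nonneg (Finset.prod_nonneg fun j _ => hpnn j)
    (Finset.sum_nonneg fun i _ => hERnn i))]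
  -- real arithmetic
  have hprod : ∀ (s : Finset (Fin N)), ∏ j ∈ s, p j = x ^ (∑ j ∈ s, l j) := by
    intro s
    rw [Real.rpow_sum_of_nonneg hxnn (fun j _ => (hl j).le)]
  have hsum_erase : ∀ i, ∑ j ∈ Finset.univ.erase i, l j = (∑ j, l j) - l i := by
    intro i
    rw [Finset.sum_erase_eq_sub (Finset.mem_univ i)]
  have hstep : ∀ i, (1 - p i) * ∏ j ∈ Finset.univ.erase i, p j
      = x ^ ((∑ j, l j) - l i) - x ^ (∑ j, l j) := by
    intro i
    rw [hprod, hsum_erase]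
    have : p i * x ^ ((∑ j, l j) - l i) = x ^ (∑ j, l j) := by
      rw [hpdef]
      rw [← Real.rpow_add_of_nonneg hxnn (hl i).le
        (by rw [← hsum_erase i]; exact Finset.sum_nonneg fun j _ => (hl j).le)]
      congr 1; ring
    nlinarith [this]
  rw [hprod Finset.univ, Finset.sum_congr rfl (fun i _ => hstep i), Finset.sum_sub_distrib,
    Finset.sum_const, Finset.card_univ, Fintype.card_fin, nsmul_eq_mul]
  ring
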